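/- If a generalised (α,β)-knight tour exists on a k-dimensional board (k ≥ 2) containing at least two squares, then gcd(α,β) = 1. -/

import Mathlib

/-- A generalised `(α,β)`-knight move in `k` dimensions. -/
def genKnightMove (α β : ℕ) {k : ℕ} (a b : Fin k → ℤ) : Prop :=
  ∃ i j : Fin k, i ≠ j ∧ |a i - b i| = (α : ℤ) ∧ |a j - b j| = (β : ℤ) ∧
    ∀ l, l ≠ i → l ≠ j → a l = b l

/-- Membership in the board `∏ [1, n i]`. -/
def onBoard {k : ℕ} (n : Fin k → ℕ) (a : Fin k → ℤ) : Prop :=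
  ∀ i, 1 ≤ a i ∧ a i ≤ (n i : ℤ)

/-- The `(α,β)`-knight graph on the board `∏ [1, n i]`. -/
def genKnightGraph (α β : ℕ) {k : ℕ} (n : Fin k → ℕ) :
    SimpleGraph {a : Fin k → ℤ // onBoard n a} where
  Adj x y := x ≠ y ∧ genKnightMove α β x.1 y.1
  symm := by
    constructor
    rintro x y ⟨hne, i, j, hij, h1, h2, h3⟩
    exact ⟨hne.symm, i, j, hij, by rwa [abs_sub_comm], by rwa [abs_sub_comm],
      fun l hli hlj => (h3 l hli hlj).symm⟩
  loopless := by
    constructor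
    rintro x ⟨hne, _⟩
    exact hne rfl

/-- If an `(α,β)`-tour exists on a board with at least two squares, then
`α` and `β` are coprime. -/
theorem gcd_eq_one_of_gen_tour (α β : ℕ) (hα : 0 < α) (hβ : 0 < β)
    {k : ℕ} (hk : 2 ≤ k) (n : Fin k → ℕ)
    (htwo : ∃ a b : Fin k → ℤ, onBoard n a ∧ onBoard n b ∧ a ≠ b)
    (htour : ∃ (x : {a : Fin k → ℤ // onBoard n a})
      (w : (genKnightGraph α β n).Walk x x), w.IsHamiltonianCycle) :
    Nat.gcd α β = 1 := by
  obtain ⟨x, w, hw⟩ := htour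
  set g : ℤ := (Nat.gcd α β : ℤ) with hg
  -- divisibility of coordinate differences along one edge
  have hadj : ∀ u v : {a : Fin k → ℤ // onBoard n a},
      (genKnightGraph α β n).Adj u v → ∀ l, g ∣ u.1 l - v.1 l := by
    rintro u v ⟨-, i, j, hij, h1, h2, h3⟩ l
    rcases eq_or_ne l i with rfl | hli
    · have : g ∣ |u.1 l - v.1 l| := by
        rw [h1, hg]; exact_mod_cast Int.natCast_dvd_natCast.mpr (Nat.gcd_dvd_left α β)
      exact (dvd_abs _ _).mp this
    rcases eq_or_ne l j with rfl | hlj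
    · have : g ∣ |u.1 l - v.1 l| := by
        rw [h2, hg]; exact_mod_cast Int.natCast_dvd_natCast.mpr (Nat.gcd_dvd_right α β)
      exact (dvd_abs _ _).mp this
    · rw [h3 l hli hlj]; simp
  -- divisibility along any walk
  have hwalk : ∀ (u v : {a : Fin k → ℤ // onBoard n a})
      (p : (genKnightGraph α β n).Walk u v) (l : Fin k), g ∣ u.1 l - v.1 l := by
    intro u v p
    induction p with
    | nil => simp
    | cons h p ih =>
      intro l
      have h1 := hadj _ _ h l
      have h2 := ih l
      have := dvd_add h1 h2
      simpa using this
  -- reachability between any two board squares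
  have hreach : ∀ u v : {a : Fin k → ℤ // onBoard n a}, ∀ l, g ∣ u.1 l - v.1 l := by
    intro u v l
    have hu := hw.mem_support u
    have hv := hw.mem_support v
    have p : (genKnightGraph α β n).Walk u v :=
      ((w.takeUntil u hu).reverse.append (w.takeUntil v hv))
    exact hwalk u v p l
  -- build two board squares differing by 1 in one coordinate
  obtain ⟨a, b, ha, hb, hab⟩ := htwo
  obtain ⟨i, hi⟩ := Function.ne_iff.mp hab
  have key : ∀ a b : Fin k → ℤ, onBoard n a → onBoard n b → a i < b i →
      Nat.gcd α β = 1 := by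
    intro a b ha hb hlt
    set c : Fin k → ℤ := Function.update a i (a i + 1) with hc
    have hcb : onBoard n c := by
      intro j
      rcases eq_or_ne j i with rfl | hj
      · simp only [hc, Function.update_self]
        constructor
        · linarith [(ha j).1]
        · have := (hb j).2; omega
      · simp only [hc, Function.update_of_ne hj]; exact ha j
    have hdvd := hreach ⟨a, ha⟩ ⟨c, hcb⟩ i
    simp only [hc, Function.update_self] at hdvd
    have : g ∣ 1 := by
      have : g ∣ -1 := by simpa using hdvd
      exact (dvd_neg).mp this
    have := Int.eq_one_of_dvd_one (by positivity) this
    rw [hg] at this; exact_mod_cast this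
  rcases lt_or_gt_of_ne hi with h | h
  · exact key a b ha hb h
  · exact key b a hb ha h
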